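/- The Riccati-type ODE 2c'(u) - 7/(9u³) = -2c(u)² has no rational solution c ∈ ℂ(u). -/
import Mathlib

open Polynomial

private lemma aux_der (D : Derivation ℂ (RatFunc ℂ) (RatFunc ℂ)) (hD : D RatFunc.X = 1)
    (f : ℂ[X]) :
    D (algebraMap ℂ[X] (RatFunc ℂ) f) = algebraMap ℂ[X] (RatFunc ℂ) (derivative f) := by
  have h1 : ∀ g : ℂ[X], aeval RatFunc.X g = algebraMap ℂ[X] (RatFunc ℂ) g := by
    intro g
    have : (aeval RatFunc.X : ℂ[X] →ₐ[ℂ] RatFunc ℂ) =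
        IsScalarTower.toAlgHom ℂ ℂ[X] (RatFunc ℂ) := by
      apply Polynomial.algHom_ext
      simp [RatFunc.algebraMap_X]
    exact congrArg (fun φ => φ g) this
  rw [← h1, ← h1, Derivation.comp_aeval_eq, hD, smul_eq_mul, mul_one]

/-- The Riccati-type ODE `2c'(u) - 7/(9u³) = -2c(u)²` has no rational solution
`c ∈ ℂ(u)`. Here `D` is the (unique) `ℂ`-derivation of `ℂ(u) = RatFunc ℂ` with
`D u = 1`, i.e. differentiation with respect to `u`. -/
theorem stmt8 (D : Derivation ℂ (RatFunc ℂ) (RatFunc ℂ)) (hD : D RatFunc.X = 1)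
    (c : RatFunc ℂ) :
    ¬ (2 * D c - 7 / (9 * RatFunc.X ^ 3) = -2 * c ^ 2) := by
  intro h
  set φ := algebraMap ℂ[X] (RatFunc ℂ) with hφ
  set p := c.num with hp
  set q := c.denom with hq
  have hq0 : φ q ≠ 0 := RatFunc.algebraMap_ne_zero (RatFunc.denom_ne_zero c)
  have hcop : IsCoprime p q := RatFunc.isCoprime_num_denom c
  have hcq : c * φ q = φ p := by
    conv_lhs => rw [← RatFunc.num_div_denom c]
    exact div_mul_cancel₀ _ hq0
  have hDc : D c * φ q + c * φ (derivative q) = φ (derivative p) := by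
    have h2 := congrArg D hcq
    rw [D.leibniz, aux_der D hD, aux_der D hD, smul_eq_mul, smul_eq_mul] at h2
    linear_combination h2
  have hX : (RatFunc.X : RatFunc ℂ) ≠ 0 := RatFunc.X_ne_zero
  -- clear denominators in the ODE
  have h93 : (9 : RatFunc ℂ) * RatFunc.X ^ 3 ≠ 0 := by
    have : CharZero (RatFunc ℂ) :=
      charZero_of_injective_algebraMap (algebraMap ℂ (RatFunc ℂ)).injective
    exact mul_ne_zero (by norm_num) (pow_ne_zero _ hX)
  have h' := congrArg (fun z => z * (9 * RatFunc.X ^ 3)) h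
  simp only [sub_mul, div_mul_cancel₀ _ h93] at h'
  -- the key identity in RatFunc ℂ
  have heq : φ (18 * X ^ 3 * (derivative p * q - p * derivative q) + 18 * X ^ 3 * p ^ 2)
      = φ (7 * q ^ 2) := by
    rw [hφ]
    push_cast [map_add, map_mul, map_sub, map_pow, map_ofNat, RatFunc.algebraMap_X]
    linear_combination (φ q) ^ 2 * h'
      - (18 * RatFunc.X ^ 3 * φ q) * hDc
      + (18 * RatFunc.X ^ 3 * (φ (derivative q) - φ p - c * φ q)) * hcq
  have key : (18 : ℂ[X]) * X ^ 3 * (derivative p * q - p * derivative q) + 18 * X ^ 3 * p ^ 2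
      = 7 * q ^ 2 := RatFunc.algebraMap_injective ℂ heq
  have hXprime : Prime (X : ℂ[X]) := Polynomial.prime_X
  have hXne : (X : ℂ[X]) ≠ 0 := X_ne_zero
  have h7 : IsUnit (7 : ℂ[X]) := by
    rw [(map_ofNat (C : ℂ →+* ℂ[X]) 7).symm]
    exact isUnit_C.mpr (by norm_num)
  have h18 : IsUnit (18 : ℂ[X]) := by
    rw [(map_ofNat (C : ℂ →+* ℂ[X]) 18).symm]
    exact isUnit_C.mpr (by norm_num)
  -- X^2 divides q
  have hdq2 : (X : ℂ[X]) ^ 3 ∣ 7 * q ^ 2 := by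
    rw [← key]
    exact ⟨18 * (derivative p * q - p * derivative q) + 18 * p ^ 2, by ring⟩
  have hdq2' : (X : ℂ[X]) ^ 3 ∣ q ^ 2 := (h7.dvd_mul_left).mp hdq2
  have hXq : (X : ℂ[X]) ∣ q :=
    hXprime.dvd_of_dvd_pow (dvd_trans (dvd_pow_self _ (by norm_num)) hdq2')
  obtain ⟨t, ht⟩ := hXq
  have hXt : (X : ℂ[X]) ∣ t := by
    apply hXprime.dvd_of_dvd_pow (n := 2)
    have h5 : (X : ℂ[X]) ^ 2 * X ∣ X ^ 2 * t ^ 2 := by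
      have h6 : q ^ 2 = X ^ 2 * t ^ 2 := by rw [ht]; ring
      rw [← h6, show (X:ℂ[X])^2 * X = X ^ 3 by ring]; exact hdq2'
    exact (mul_dvd_mul_iff_left (pow_ne_zero 2 hXne)).mp h5
  obtain ⟨s, hs⟩ := hXt
  have hqs : q = X ^ 2 * s := by rw [ht, hs]; ring
  -- X does not divide p
  have hXp : ¬ (X : ℂ[X]) ∣ p := by
    intro hdvd
    exact Polynomial.not_isUnit_X
      (hcop.isUnit_of_dvd' hdvd ⟨X * s, by rw [hqs]; ring⟩)
  -- X divides derivative q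
  have hXdq : derivative q = X * (C 2 * s + X * derivative s) := by
    rw [hqs, derivative_mul, derivative_X_pow]
    push_cast
    ring
  set a : ℂ[X] := C 2 * s + X * derivative s with ha
  -- X^4 divides 18 * X^3 * p^2
  have hX4 : (X : ℂ[X]) ^ 3 * X ∣ X ^ 3 * (18 * p ^ 2) := by
    have h8 : 18 * X ^ 3 * p ^ 2
        = 7 * q ^ 2 - 18 * X ^ 3 * (derivative p * q - p * derivative q) := by
      linear_combination key
    refine ⟨7 * s ^ 2 - 18 * (derivative p * X * s - p * a), ?_⟩
    rw [show (X:ℂ[X])^3 * (18 * p^2) = 18 * X^3 * p^2 by ring, h8, hXdq, hqs]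
    ring
  have hXp2 : (X : ℂ[X]) ∣ 18 * p ^ 2 :=
    (mul_dvd_mul_iff_left (pow_ne_zero 3 hXne)).mp hX4
  exact hXp (hXprime.dvd_of_dvd_pow (n := 2) ((h18.dvd_mul_left).mp hXp2))
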